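/- (Type A_n, highest root.) Let n ≥ 1 and let h = e₁ − e_{n+1} ∈ ℝ^{n+1} (the highest root of A_n). Then for every λ ∈ ℝ^{n+1} with weakly decreasing coordinates λ₁ ≥ λ₂ ≥ ⋯ ≥ λ_{n+1} and λ₁ > λ_{n+1}, one has ℓ_h⁻(λ) = n; that is, the least k such that some composition w of k simple reflections of type A_n satisfies ⟨w λ, h⟩ < 0 equals n. -/

import Mathlib

open scoped RealInnerProductSpace

/-- The `j`-th simple reflection of type `Aₙ` (`1 ≤ j ≤ n`), acting on `ℝ^{n+1}`:
it transposes the coordinates numbered `j` and `j+1` (in `1`-based numbering). -/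
noncomputable def sA (n j : ℕ) :
    EuclideanSpace ℝ (Fin (n + 1)) → EuclideanSpace ℝ (Fin (n + 1)) :=
  fun v => WithLp.toLp 2 fun i =>
    v ⟨(if (i : ℕ) + 1 = j then j else if (i : ℕ) = j then j - 1 else (i : ℕ)) % (n + 1),
      Nat.mod_lt _ (Nat.succ_pos n)⟩

/-- The composition of the simple reflections indexed by the entries of `l`
(the last entry of the list is applied first). -/
noncomputable def compA (n : ℕ) (l : List ℕ) :
    EuclideanSpace ℝ (Fin (n + 1)) → EuclideanSpace ℝ (Fin (n + 1)) :=
  l.foldr (fun j g => sA n j ∘ g) id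

/-- The fundamental weight `ϖⱼ = e₁ + ⋯ + eⱼ − (j/(n+1))·ε` of type `Aₙ` (`1 ≤ j ≤ n`). -/
noncomputable def wtA (n j : ℕ) : EuclideanSpace ℝ (Fin (n + 1)) :=
  WithLp.toLp 2 fun i => (if (i : ℕ) < j then 1 else 0) - (j : ℝ) / ((n : ℝ) + 1)

/-- The highest root `e₁ − e_{n+1}` of type `Aₙ`. -/
noncomputable def hrA (n : ℕ) : EuclideanSpace ℝ (Fin (n + 1)) :=
  WithLp.toLp 2 fun i => if (i : ℕ) = 0 then 1 else if (i : ℕ) = n then -1 else 0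

/-- index action of `sA n j`. -/
def tauA (n j : ℕ) : Fin (n + 1) → Fin (n + 1) :=
  fun i => ⟨(if (i : ℕ) + 1 = j then j else if (i : ℕ) = j then j - 1 else (i : ℕ)) % (n + 1),
      Nat.mod_lt _ (Nat.succ_pos n)⟩

def permA (n : ℕ) (l : List ℕ) : Fin (n + 1) → Fin (n + 1) :=
  l.foldr (fun j g => g ∘ tauA n j) id

lemma permA_nil (n : ℕ) (x : Fin (n+1)) : permA n [] x = x := rfl

lemma permA_cons (n j : ℕ) (l : List ℕ) (x : Fin (n+1)) :
    permA n (j :: l) x = permA n l (tauA n j x) := rfl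

lemma compA_eq_perm (n : ℕ) (l : List ℕ) (v : EuclideanSpace ℝ (Fin (n+1))) (i : Fin (n+1)) :
    compA n l v i = v (permA n l i) := by
  induction l generalizing i with
  | nil => rfl
  | cons j t ih =>
      show sA n j (compA n t v) i = _
      rw [sA]
      simp only [permA_cons]
      exact ih _

lemma permA_append (n : ℕ) (l1 l2 : List ℕ) (x : Fin (n+1)) :
    permA n (l1 ++ l2) x = permA n l2 (permA n l1 x) := by
  induction l1 generalizing x with
  | nil => rfl
  | cons j t ih => rw [List.cons_append, permA_cons, permA_cons, ih]

lemma tauA_val (n j : ℕ) (hj1 : 1 ≤ j) (hjn : j ≤ n) (x : Fin (n+1)) :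
    (tauA n j x : ℕ) = if (x : ℕ) + 1 = j then j else if (x : ℕ) = j then j - 1 else (x : ℕ) := by
  have hx := x.isLt
  show (_ % (n+1)) = _
  apply Nat.mod_eq_of_lt
  split_ifs <;> omega

lemma tauA_step (n j : ℕ) (hj1 : 1 ≤ j) (hjn : j ≤ n) (a b : Fin (n+1)) :
    ((tauA n j a : ℕ) : ℤ) - ((tauA n j b : ℕ) : ℤ) ≤ ((a : ℕ) : ℤ) - ((b : ℕ) : ℤ) + 1 ∨
      (((a : ℕ) : ℤ) - ((b : ℕ) : ℤ) = -1 ∧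
        ((tauA n j a : ℕ) : ℤ) - ((tauA n j b : ℕ) : ℤ) = 1) := by
  rw [tauA_val n j hj1 hjn a, tauA_val n j hj1 hjn b]
  have ha := a.isLt
  have hb := b.isLt
  split_ifs <;> omega

lemma lower_key (n : ℕ) (l : List ℕ) (hval : ∀ m ∈ l, 1 ≤ m ∧ m ≤ n) :
    ((permA n l ⟨0, Nat.succ_pos n⟩ : ℕ) : ℤ) - ((permA n l ⟨n, Nat.lt_succ_self n⟩ : ℕ) : ℤ)
      ≤ (l.length : ℤ) - n ∨ (n : ℤ) ≤ l.length := by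
  induction l using List.reverseRecOn with
  | nil => left; simp [permA_nil]
  | append_singleton t j ih =>
      have hval' : ∀ m ∈ t, 1 ≤ m ∧ m ≤ n := fun m hm => hval m (by simp [hm])
      have hj : 1 ≤ j ∧ j ≤ n := hval j (by simp)
      rcases ih hval' with h | h
      · by_cases hlen : (n : ℤ) ≤ t.length + 1
        · right; simpa using hlen
        · left
          have h2 : ((permA n t ⟨0, Nat.succ_pos n⟩ : ℕ) : ℤ)
              - ((permA n t ⟨n, Nat.lt_succ_self n⟩ : ℕ) : ℤ) ≤ -2 := by omega
          have hstep := tauA_step n j hj.1 hj.2 (permA n t ⟨0, Nat.succ_pos n⟩)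
            (permA n t ⟨n, Nat.lt_succ_self n⟩)
          rw [permA_append, permA_append]
          have e1 : permA n [j] (permA n t ⟨0, Nat.succ_pos n⟩)
              = tauA n j (permA n t ⟨0, Nat.succ_pos n⟩) := rfl
          have e2 : permA n [j] (permA n t ⟨n, Nat.lt_succ_self n⟩)
              = tauA n j (permA n t ⟨n, Nat.lt_succ_self n⟩) := rfl
          rw [e1, e2]
          rcases hstep with h3 | h3
          · simp only [List.length_append, List.length_singleton]
            push_cast
            omega
          · omega
      · right
        simp only [List.length_append, List.length_singleton]
        push_cast
        omega

/-- ascending list [a, a+1, ..., a+k-1] -/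
def ascL : ℕ → ℕ → List ℕ
  | _, 0 => []
  | a, k+1 => a :: ascL (a+1) k

/-- descending list [b, b-1, ..., b-k+1] -/
def descL : ℕ → ℕ → List ℕ
  | _, 0 => []
  | b, k+1 => b :: descL (b-1) k

lemma ascL_length (a k : ℕ) : (ascL a k).length = k := by
  induction k generalizing a with
  | zero => rfl
  | succ k ih => simp [ascL, ih]

lemma descL_length (b k : ℕ) : (descL b k).length = k := by
  induction k generalizing b with
  | zero => rfl
  | succ k ih => simp [descL, ih]

lemma ascL_mem (n a k : ℕ) (h1 : 1 ≤ a) (h2 : a + k ≤ n + 1) :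
    ∀ m ∈ ascL a k, 1 ≤ m ∧ m ≤ n := by
  induction k generalizing a with
  | zero => simp [ascL]
  | succ k ih =>
      intro m hm
      rcases List.mem_cons.mp hm with rfl | hm
      · omega
      · exact ih (a+1) (by omega) (by omega) m hm

lemma descL_mem (n b k : ℕ) (h1 : k ≤ b) (h2 : b ≤ n) :
    ∀ m ∈ descL b k, 1 ≤ m ∧ m ≤ n := by
  induction k generalizing b with
  | zero => simp [descL]
  | succ k ih =>
      intro m hm
      rcases List.mem_cons.mp hm with rfl | hm
      · omega
      · exact ih (b-1) (by omega) (by omega) m hm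

lemma permA_descL_top (n : ℕ) : ∀ k b, k ≤ b → b ≤ n → ∀ x : Fin (n+1), (x : ℕ) = b →
    (permA n (descL b k) x : ℕ) = b - k := by
  intro k
  induction k with
  | zero => intro b _ _ x hx; simpa [descL, permA_nil] using hx
  | succ k ih =>
      intro b hkb hbn x hx
      rw [descL, permA_cons]
      have hb1 : 1 ≤ b := by omega
      have htv : (tauA n b x : ℕ) = b - 1 := by
        rw [tauA_val n b hb1 hbn x]
        split_ifs <;> omega
      have := ih (b-1) (by omega) (by omega) (tauA n b x) htv
      omega

lemma permA_descL_zero (n : ℕ) : ∀ k b, k + 1 ≤ b → b ≤ n → ∀ x : Fin (n+1), (x : ℕ) = 0 →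
    (permA n (descL b k) x : ℕ) = 0 := by
  intro k
  induction k with
  | zero => intro b _ _ x hx; simpa [descL, permA_nil] using hx
  | succ k ih =>
      intro b hkb hbn x hx
      rw [descL, permA_cons]
      have htv : (tauA n b x : ℕ) = 0 := by
        rw [tauA_val n b (by omega) hbn x]
        split_ifs <;> omega
      exact ih (b-1) (by omega) (by omega) (tauA n b x) htv

lemma permA_ascL_front (n : ℕ) : ∀ k a, 1 ≤ a → a + k ≤ n + 1 → ∀ x : Fin (n+1),
    (x : ℕ) = a - 1 → (permA n (ascL a k) x : ℕ) = a - 1 + k := by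
  intro k
  induction k with
  | zero => intro a _ _ x hx; simpa [ascL, permA_nil] using hx
  | succ k ih =>
      intro a ha1 hak x hx
      rw [ascL, permA_cons]
      have htv : (tauA n a x : ℕ) = a := by
        rw [tauA_val n a ha1 (by omega) x]
        split_ifs <;> omega
      have := ih (a+1) (by omega) (by omega) (tauA n a x) (by omega)
      omega

lemma permA_ascL_back (n : ℕ) : ∀ k a, 1 ≤ k → 1 ≤ a → a + k ≤ n + 1 → ∀ x : Fin (n+1),
    (x : ℕ) = a + k - 1 → (permA n (ascL a k) x : ℕ) = a + k - 2 := by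
  intro k
  induction k with
  | zero => omega
  | succ k ih =>
      intro a _ ha1 hak x hx
      rw [ascL, permA_cons]
      rcases Nat.eq_zero_or_pos k with hk0 | hk1
      · subst hk0
        have htv : (tauA n a x : ℕ) = a - 1 := by
          rw [tauA_val n a ha1 (by omega) x]
          split_ifs <;> omega
        rw [ascL, permA_nil]
        omega
      · have htv : (tauA n a x : ℕ) = (x : ℕ) := by
          rw [tauA_val n a ha1 (by omega) x]
          split_ifs <;> omega
        have := ih (a+1) hk1 (by omega) (by omega) (tauA n a x) (by omega)
        omega

lemma inner_hrA (n : ℕ) (hn : 1 ≤ n) (v : EuclideanSpace ℝ (Fin (n+1))) :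
    ⟪v, hrA n⟫ = v ⟨0, Nat.succ_pos n⟩ - v ⟨n, Nat.lt_succ_self n⟩ := by
  have h : ∀ i : Fin (n+1), hrA n i =
      (if i = ⟨0, Nat.succ_pos n⟩ then (1:ℝ) else 0) +
      (if i = ⟨n, Nat.lt_succ_self n⟩ then (-1:ℝ) else 0) := by
    intro i
    have e0 : (i = (⟨0, Nat.succ_pos n⟩ : Fin (n+1))) ↔ (i:ℕ) = 0 :=
      ⟨fun h => by rw [h], fun h => Fin.ext h⟩
    have en : (i = (⟨n, Nat.lt_succ_self n⟩ : Fin (n+1))) ↔ (i:ℕ) = n :=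
      ⟨fun h => by rw [h], fun h => Fin.ext h⟩
    show (if (i : ℕ) = 0 then (1:ℝ) else if (i:ℕ) = n then -1 else 0) = _
    by_cases h0 : (i : ℕ) = 0
    · rw [if_pos h0, if_pos (e0.mpr h0),
        if_neg (fun hc => by have := en.mp hc; omega)]
      norm_num
    · by_cases h1 : (i : ℕ) = n
      · rw [if_neg h0, if_pos h1, if_neg (fun hc => h0 (e0.mp hc)), if_pos (en.mpr h1)]
        norm_num
      · rw [if_neg h0, if_neg h1, if_neg (fun hc => h0 (e0.mp hc)),
          if_neg (fun hc => h1 (en.mp hc))]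
        norm_num
  rw [PiLp.inner_apply]
  simp only [RCLike.inner_apply, conj_trivial]
  rw [Finset.sum_congr rfl (fun i _ => mul_comm ((hrA n) i) (v i))]
  calc ∑ i, v i * hrA n i
      = ∑ i : Fin (n+1), (v i * (if i = ⟨0, Nat.succ_pos n⟩ then (1:ℝ) else 0)
          + v i * (if i = ⟨n, Nat.lt_succ_self n⟩ then (-1:ℝ) else 0)) := by
        apply Finset.sum_congr rfl
        intro i _
        rw [h i]
        ring
    _ = v ⟨0, Nat.succ_pos n⟩ - v ⟨n, Nat.lt_succ_self n⟩ := by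
        rw [Finset.sum_add_distrib]
        simp only [mul_ite, mul_one, mul_zero, Finset.sum_ite_eq', Finset.sum_ite_eq, Finset.mem_univ, if_true]
        ring

lemma exists_strict_desc (n : ℕ) (lam : EuclideanSpace ℝ (Fin (n + 1)))
    (hstr : lam ⟨n, Nat.lt_succ_self n⟩ < lam ⟨0, Nat.succ_pos n⟩) :
    ∃ (i : ℕ) (_ : i < n), lam ⟨i+1, by omega⟩ < lam ⟨i, by omega⟩ := by
  by_contra hc
  push_neg at hc
  have key : ∀ m (hm : m ≤ n), lam ⟨0, Nat.succ_pos n⟩ ≤ lam ⟨m, by omega⟩ := by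
    intro m
    induction m with
    | zero => intro _; exact le_refl _
    | succ m ih =>
        intro hm
        exact le_trans (ih (by omega)) (hc m (by omega))
  exact absurd hstr (not_lt.mpr (key n le_rfl))

theorem statement7 (n : ℕ) (hn : 1 ≤ n)
    (lam : EuclideanSpace ℝ (Fin (n + 1)))
    (hdec : ∀ i j : Fin (n + 1), i ≤ j → lam j ≤ lam i)
    (hstr : lam ⟨n, by omega⟩ < lam ⟨0, by omega⟩) :
    IsLeast {k : ℕ | ∃ l : List ℕ, (∀ m ∈ l, 1 ≤ m ∧ m ≤ n) ∧ l.length = k ∧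
        ⟪compA n l lam, hrA n⟫ < 0} n := by
  constructor
  · -- membership
    obtain ⟨i, hi, hlt⟩ := exists_strict_desc n lam hstr
    refine ⟨descL n (n - 1 - i) ++ ascL 1 (i + 1), ?_, ?_, ?_⟩
    · intro m hm
      rcases List.mem_append.mp hm with hm | hm
      · exact descL_mem n n (n-1-i) (by omega) le_rfl m hm
      · exact ascL_mem n 1 (i+1) le_rfl (by omega) m hm
    · rw [List.length_append, descL_length, ascL_length]; omega
    · rw [inner_hrA n hn]
      rw [compA_eq_perm, compA_eq_perm, permA_append, permA_append]
      have hz : (permA n (descL n (n-1-i)) ⟨0, Nat.succ_pos n⟩ : ℕ) = 0 :=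
        permA_descL_zero n (n-1-i) n (by omega) le_rfl _ rfl
      have hnn : (permA n (descL n (n-1-i)) ⟨n, Nat.lt_succ_self n⟩ : ℕ) = i + 1 := by
        have := permA_descL_top n (n-1-i) n (by omega) le_rfl ⟨n, Nat.lt_succ_self n⟩ rfl
        omega
      have h1 : (permA n (ascL 1 (i+1)) (permA n (descL n (n-1-i)) ⟨0, Nat.succ_pos n⟩) : ℕ)
          = i + 1 := by
        have := permA_ascL_front n (i+1) 1 le_rfl (by omega)
          (permA n (descL n (n-1-i)) ⟨0, Nat.succ_pos n⟩) (by omega)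
        omega
      have h2 : (permA n (ascL 1 (i+1)) (permA n (descL n (n-1-i)) ⟨n, Nat.lt_succ_self n⟩) : ℕ)
          = i := by
        have := permA_ascL_back n (i+1) 1 (by omega) le_rfl (by omega)
          (permA n (descL n (n-1-i)) ⟨n, Nat.lt_succ_self n⟩) (by omega)
        omega
      have e1 : permA n (ascL 1 (i+1)) (permA n (descL n (n-1-i)) ⟨0, Nat.succ_pos n⟩)
          = ⟨i+1, by omega⟩ := Fin.ext h1
      have e2 : permA n (ascL 1 (i+1)) (permA n (descL n (n-1-i)) ⟨n, Nat.lt_succ_self n⟩)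
          = ⟨i, by omega⟩ := Fin.ext h2
      rw [congrArg lam e1, congrArg lam e2]
      linarith
  · -- lower bound
    rintro k ⟨l, hval, hlen, hinner⟩
    rw [inner_hrA n hn, compA_eq_perm, compA_eq_perm] at hinner
    have hord : (permA n l ⟨n, Nat.lt_succ_self n⟩ : ℕ) < (permA n l ⟨0, Nat.succ_pos n⟩ : ℕ) := by
      by_contra hle
      push_neg at hle
      have := hdec _ _ (Fin.le_def.mpr hle)
      linarith
    rcases lower_key n l hval with h | h
    · omega
    · omega
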